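/- arXiv:2108.09585 — 2 statements merged into one kernel-verified Lean document; each statement's English description precedes it below -/
import Mathlib

section
/- Value-function version of the extended Porteus theorem. Assume: (P(a)) Ṽ is as given (nonempty and closed under pointwise convergence); (P(b)) for every bounded v : S × B → ℝ such that v(·, b) ∈ Ṽ for every b ∈ B, also (Hv)(·, b) ∈ Ṽ for every b ∈ B. Then the unique bounded fixed point v* of H satisfies v*(·, b) ∈ Ṽ for every b ∈ B. -/
open Finset

/-- The belief simplex over the modulation space `M`. -/
abbrev Belief (M : Type) [Fintype M] : Type :=
  {b : M → ℝ // (∀ μ, 0 ≤ b μ) ∧ ∑ μ, b μ = 1}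

/-- A finite SEP-POMDP: feasible action sets, cost function, state transition
probabilities, modulation/observation probabilities, and a discount factor. -/
structure SEP (S Y M A : Type) [Fintype S] [Fintype Y] [Fintype M] [Fintype A] where
  act : S → Finset A
  act_ne : ∀ s, (act s).Nonempty
  c : S → Y → A → ℝ
  p : Y → S → A → S → ℝ
  p_nonneg : ∀ y' s a s', 0 ≤ p y' s a s'
  p_sum : ∀ y' s a, ∑ s', p y' s a s' = 1
  Q : M → Y → M → ℝ
  Q_nonneg : ∀ μ y' μ', 0 ≤ Q μ y' μ'
  Q_sum : ∀ μ, ∑ y', ∑ μ', Q μ y' μ' = 1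
  β : ℝ
  β_nonneg : 0 ≤ β
  β_lt_one : β < 1

namespace SEP

variable {S Y M A : Type} [Fintype S] [Fintype Y] [Fintype M] [Fintype A]

/-- `σ(y' | b) = ∑ μ, ∑ μ', b μ * Q μ y' μ'`. -/
def sig (P : SEP S Y M A) (b : Belief M) (y' : Y) : ℝ :=
  ∑ μ, ∑ μ', b.1 μ * P.Q μ y' μ'

/-- The Bayesian belief update `λ(y', b)`. -/
noncomputable def lam (P : SEP S Y M A) (y' : Y) (b : Belief M) : Belief M :=
  if h : 0 < P.sig b y' then
    ⟨fun μ' => (∑ μ, b.1 μ * P.Q μ y' μ') / P.sig b y',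
      fun μ' => div_nonneg (Finset.sum_nonneg fun μ _ =>
        mul_nonneg (b.2.1 μ) (P.Q_nonneg μ y' μ')) h.le,
      by
        rw [← Finset.sum_div, Finset.sum_comm]
        exact div_self (ne_of_gt h)⟩
  else b

/-- `h_{y'}(s, a, v̄) = c s y' a + β * ∑ s', p y' s a s' * v̄ s'`. -/
def hy (P : SEP S Y M A) (y' : Y) (s : S) (a : A) (vb : S → ℝ) : ℝ :=
  P.c s y' a + P.β * ∑ s', P.p y' s a s' * vb s'

/-- The Bellman operator `H` of the SEP-POMDP. -/
noncomputable def H (P : SEP S Y M A) (v : S → Belief M → ℝ) (s : S) (b : Belief M) : ℝ :=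
  (P.act s).inf' (P.act_ne s) fun a =>
    ∑ y', P.sig b y' * P.hy y' s a fun s' => v s' (P.lam y' b)

/-- Boundedness of a function `v : S × B → ℝ`. -/
def Bdd (v : S → Belief M → ℝ) : Prop :=
  ∃ C, ∀ s b, |v s b| ≤ C

end SEP


section Aux

variable {S Y M A : Type} [Fintype S] [Fintype Y] [Fintype M] [Fintype A]

lemma sig_nonneg' (P : SEP S Y M A) (b : Belief M) (y' : Y) : 0 ≤ P.sig b y' :=
  Finset.sum_nonneg fun μ _ => Finset.sum_nonneg fun μ' _ =>
    mul_nonneg (b.2.1 μ) (P.Q_nonneg μ y' μ')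

lemma sig_sum' (P : SEP S Y M A) (b : Belief M) : ∑ y', P.sig b y' = 1 := by
  unfold SEP.sig
  rw [Finset.sum_comm]
  have : ∀ μ : M, ∑ y' : Y, ∑ μ' : M, b.1 μ * P.Q μ y' μ' = b.1 μ := by
    intro μ
    simp_rw [← Finset.mul_sum, P.Q_sum, mul_one]
  simp_rw [this]
  exact b.2.2

lemma H_contract' (P : SEP S Y M A) (v w : S → Belief M → ℝ) (C : ℝ) (hC : 0 ≤ C)
    (h : ∀ s b, |v s b - w s b| ≤ C) :
    ∀ s b, |P.H v s b - P.H w s b| ≤ P.β * C := by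
  intro s b
  set f : A → ℝ := fun a => ∑ y', P.sig b y' * P.hy y' s a fun s' => v s' (P.lam y' b) with hf
  set g : A → ℝ := fun a => ∑ y', P.sig b y' * P.hy y' s a fun s' => w s' (P.lam y' b) with hg
  have key : ∀ a : A, |f a - g a| ≤ P.β * C := by
    intro a
    have hdiff : f a - g a = ∑ y', P.sig b y' *
        (P.β * ∑ s', P.p y' s a s' * (v s' (P.lam y' b) - w s' (P.lam y' b))) := by
      rw [hf, hg, ← Finset.sum_sub_distrib]
      refine Finset.sum_congr rfl fun y' _ => ?_
      rw [← mul_sub]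
      congr 1
      unfold SEP.hy
      simp_rw [mul_sub]
      rw [Finset.sum_sub_distrib]
      ring
    rw [hdiff]
    calc |∑ y', P.sig b y' * (P.β * ∑ s', P.p y' s a s' * (v s' (P.lam y' b) - w s' (P.lam y' b)))|
        ≤ ∑ y', |P.sig b y' * (P.β * ∑ s', P.p y' s a s' * (v s' (P.lam y' b) - w s' (P.lam y' b)))| :=
          Finset.abs_sum_le_sum_abs _ _
      _ ≤ ∑ y', P.sig b y' * (P.β * C) := by
          refine Finset.sum_le_sum fun y' _ => ?_
          rw [abs_mul, abs_of_nonneg (sig_nonneg' P b y')]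
          refine mul_le_mul_of_nonneg_left ?_ (sig_nonneg' P b y')
          rw [abs_mul, abs_of_nonneg P.β_nonneg]
          refine mul_le_mul_of_nonneg_left ?_ P.β_nonneg
          calc |∑ s', P.p y' s a s' * (v s' (P.lam y' b) - w s' (P.lam y' b))|
              ≤ ∑ s', |P.p y' s a s' * (v s' (P.lam y' b) - w s' (P.lam y' b))| :=
                Finset.abs_sum_le_sum_abs _ _
            _ ≤ ∑ s', P.p y' s a s' * C := by
                refine Finset.sum_le_sum fun s' _ => ?_
                rw [abs_mul, abs_of_nonneg (P.p_nonneg y' s a s')]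
                exact mul_le_mul_of_nonneg_left (h s' (P.lam y' b)) (P.p_nonneg y' s a s')
            _ = C := by rw [← Finset.sum_mul, P.p_sum, one_mul]
      _ = P.β * C := by rw [← Finset.sum_mul, sig_sum' P b, one_mul]
  have hHv : P.H v s b = (P.act s).inf' (P.act_ne s) f := rfl
  have hHw : P.H w s b = (P.act s).inf' (P.act_ne s) g := rfl
  rw [hHv, hHw, abs_sub_le_iff]
  constructor
  · obtain ⟨a, ha, hEq⟩ := Finset.exists_mem_eq_inf' (P.act_ne s) g
    have h1 : (P.act s).inf' (P.act_ne s) f ≤ f a := Finset.inf'_le _ ha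
    have h2 : f a - g a ≤ P.β * C := (abs_le.mp (key a)).2
    rw [hEq]; linarith
  · obtain ⟨a, ha, hEq⟩ := Finset.exists_mem_eq_inf' (P.act_ne s) f
    have h1 : (P.act s).inf' (P.act_ne s) g ≤ g a := Finset.inf'_le _ ha
    have h2 : -(P.β * C) ≤ f a - g a := (abs_le.mp (key a)).1
    rw [hEq]; linarith

end Aux

/-- **Value-function version of the extended Porteus theorem.** Under P(a) and
P(b), the unique bounded fixed point `vstar` of `H` satisfies
`vstar (·, b) ∈ Vt` for every belief `b`. -/
theorem extended_porteus_value {S Y M A : Type} [Fintype S] [Fintype Y] [Fintype M] [Fintype A]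
    [Nonempty S] [Nonempty Y] [Nonempty M] [Nonempty A]
    (P : SEP S Y M A)
    (Vt : Set (S → ℝ)) (hVne : Vt.Nonempty) (hVclosed : IsClosed Vt)
    -- P(b): structured value preservation
    (hPb : ∀ v : S → Belief M → ℝ, SEP.Bdd v →
      (∀ b, (fun s => v s b) ∈ Vt) → ∀ b, (fun s => P.H v s b) ∈ Vt)
    -- the unique bounded fixed point of H
    (vstar : S → Belief M → ℝ) (hbdd : SEP.Bdd vstar)
    (hfix : ∀ s b, vstar s b = P.H vstar s b) :
    ∀ b, (fun s => vstar s b) ∈ Vt := by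
  obtain ⟨w0, hw0⟩ := hVne
  obtain ⟨Cs, hCs⟩ := hbdd
  -- bound constants
  set C0 : ℝ := Finset.univ.sup' Finset.univ_nonempty (fun s => |w0 s|) with hC0def
  have hC0 : ∀ s, |w0 s| ≤ C0 := fun s =>
    Finset.le_sup' (fun s => |w0 s|) (Finset.mem_univ s)
  set C : ℝ := C0 + max Cs 0 with hCdef
  have hCnn : 0 ≤ C := add_nonneg
    (le_trans (abs_nonneg _) (hC0 (Classical.arbitrary S))) (le_max_right _ _)
  -- the iteration
  set v0 : S → Belief M → ℝ := fun s _ => w0 s with hv0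
  set seq : ℕ → (S → Belief M → ℝ) := fun n => P.H^[n] v0 with hseq
  have hseq_succ : ∀ n, seq (n + 1) = P.H (seq n) := by
    intro n
    simp [hseq, Function.iterate_succ_apply']
  -- distance bound
  have hdist : ∀ n s b, |seq n s b - vstar s b| ≤ P.β ^ n * C := by
    intro n
    induction n with
    | zero =>
      intro s b
      simp only [pow_zero, one_mul, hseq, Function.iterate_zero, id]
      calc |v0 s b - vstar s b| ≤ |v0 s b| + |vstar s b| := abs_sub _ _
        _ ≤ C0 + max Cs 0 := add_le_add (hC0 s)
            (le_trans (hCs s b) (le_max_left _ _))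
    | succ n ih =>
      intro s b
      have := H_contract' P (seq n) vstar (P.β ^ n * C)
        (mul_nonneg (pow_nonneg P.β_nonneg n) hCnn) ih s b
      rw [hseq_succ n] at *
      calc |P.H (seq n) s b - vstar s b| = |P.H (seq n) s b - P.H vstar s b| := by
            rw [← hfix s b]
        _ ≤ P.β * (P.β ^ n * C) := this
        _ = P.β ^ (n + 1) * C := by ring
  -- boundedness and membership
  have hbd : ∀ n, SEP.Bdd (seq n) := by
    intro n
    refine ⟨P.β ^ n * C + max Cs 0, fun s b => ?_⟩
    calc |seq n s b| ≤ |seq n s b - vstar s b| + |vstar s b| := by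
          have := abs_add_le (seq n s b - vstar s b) (vstar s b)
          simpa using this
      _ ≤ P.β ^ n * C + max Cs 0 := add_le_add (hdist n s b)
          (le_trans (hCs s b) (le_max_left _ _))
  have hmem : ∀ n b, (fun s => seq n s b) ∈ Vt := by
    intro n
    induction n with
    | zero =>
      intro b
      simpa [hseq, hv0] using hw0
    | succ n ih =>
      intro b
      rw [hseq_succ n]
      exact hPb (seq n) (hbd n) ih b
  -- convergence
  intro b
  have htend : Filter.Tendsto (fun n => (fun s => seq n s b)) Filter.atTop
      (nhds (fun s => vstar s b)) := by
    rw [tendsto_pi_nhds]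
    intro s
    have h0 : Filter.Tendsto (fun n => P.β ^ n * C) Filter.atTop (nhds 0) := by
      have := tendsto_pow_atTop_nhds_zero_of_lt_one P.β_nonneg P.β_lt_one
      simpa using this.mul_const C
    have : Filter.Tendsto (fun n => seq n s b - vstar s b) Filter.atTop (nhds 0) :=
      squeeze_zero_norm (fun n => hdist n s b) h0
    have := this.add_const (vstar s b)
    simpa using this
  exact hVclosed.mem_of_tendsto htend (Filter.Eventually.of_forall fun n => hmem n b)
end

section
/- Concavity of the SEP-POMDP value function in the belief. The unique bounded fixed point v* of H is concave in the belief argument: for every s ∈ S, every b₁, b₂ ∈ B, and every t ∈ [0, 1], v*(s, t • b₁ + (1 − t) • b₂) ≥ t * v*(s, b₁) + (1 − t) * v*(s, b₂), where t • b₁ + (1 − t) • b₂ denotes the pointwise convex combination (which again lies in B). -/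
open Finset

/-- Pointwise convex combination `t • b₁ + (1 - t) • b₂` of two beliefs. -/
def Belief.conv {M : Type} [Fintype M] (t : ℝ) (ht0 : 0 ≤ t) (ht1 : t ≤ 1)
    (b₁ b₂ : Belief M) : Belief M :=
  ⟨fun μ => t * b₁.1 μ + (1 - t) * b₂.1 μ,
    fun μ => add_nonneg (mul_nonneg ht0 (b₁.2.1 μ))
      (mul_nonneg (by linarith) (b₂.2.1 μ)),
    by
      rw [Finset.sum_add_distrib, ← Finset.mul_sum, ← Finset.mul_sum, b₁.2.2, b₂.2.2]
      ring⟩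


namespace SEP
variable {S Y M A : Type} [Fintype S] [Fintype Y] [Fintype M] [Fintype A]

lemma sig_nonneg (P : SEP S Y M A) (b : Belief M) (y' : Y) : 0 ≤ P.sig b y' :=
  Finset.sum_nonneg fun μ _ => Finset.sum_nonneg fun μ' _ =>
    mul_nonneg (b.2.1 μ) (P.Q_nonneg μ y' μ')

lemma sig_sum (P : SEP S Y M A) (b : Belief M) : ∑ y', P.sig b y' = 1 := by
  unfold sig
  rw [Finset.sum_comm]
  calc ∑ μ, ∑ y', ∑ μ', b.1 μ * P.Q μ y' μ'
      = ∑ μ, b.1 μ * ∑ y', ∑ μ', P.Q μ y' μ' := by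
        simp [Finset.mul_sum]
    _ = 1 := by simp [P.Q_sum, b.2.2]

lemma num_nonneg (P : SEP S Y M A) (b : Belief M) (y' : Y) (μ' : M) :
    0 ≤ ∑ μ, b.1 μ * P.Q μ y' μ' :=
  Finset.sum_nonneg fun μ _ => mul_nonneg (b.2.1 μ) (P.Q_nonneg μ y' μ')

lemma num_eq_zero (P : SEP S Y M A) (b : Belief M) (y' : Y) (h : P.sig b y' = 0) (μ' : M) :
    ∑ μ, b.1 μ * P.Q μ y' μ' = 0 := by
  have h' : ∑ μ', ∑ μ, b.1 μ * P.Q μ y' μ' = 0 := by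
    rw [Finset.sum_comm]; exact h
  exact (Finset.sum_eq_zero_iff_of_nonneg
    (fun μ' _ => P.num_nonneg b y' μ')).mp h' μ' (Finset.mem_univ μ')

lemma num_conv (P : SEP S Y M A) (b₁ b₂ : Belief M) (t : ℝ) (ht0 : 0 ≤ t) (ht1 : t ≤ 1)
    (y' : Y) (μ' : M) :
    ∑ μ, (Belief.conv t ht0 ht1 b₁ b₂).1 μ * P.Q μ y' μ'
      = t * (∑ μ, b₁.1 μ * P.Q μ y' μ') + (1 - t) * (∑ μ, b₂.1 μ * P.Q μ y' μ') := by
  simp only [Belief.conv, Finset.mul_sum, ← Finset.sum_add_distrib]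
  exact Finset.sum_congr rfl fun μ _ => by ring

lemma sig_conv (P : SEP S Y M A) (b₁ b₂ : Belief M) (t : ℝ) (ht0 : 0 ≤ t) (ht1 : t ≤ 1)
    (y' : Y) :
    P.sig (Belief.conv t ht0 ht1 b₁ b₂) y' = t * P.sig b₁ y' + (1 - t) * P.sig b₂ y' := by
  unfold sig
  rw [Finset.sum_comm, Finset.sum_comm (s := Finset.univ) (t := Finset.univ)
    (f := fun μ μ' => b₁.1 μ * P.Q μ y' μ'),
    Finset.sum_comm (s := Finset.univ) (t := Finset.univ)
    (f := fun μ μ' => b₂.1 μ * P.Q μ y' μ'), Finset.mul_sum, Finset.mul_sum,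
    ← Finset.sum_add_distrib]
  exact Finset.sum_congr rfl fun μ' _ => P.num_conv b₁ b₂ t ht0 ht1 y' μ'

lemma hy_affine (P : SEP S Y M A) (y' : Y) (s : S) (a : A) (w : ℝ) (f g : S → ℝ) :
    P.hy y' s a (fun s' => w * f s' + (1 - w) * g s')
      = w * P.hy y' s a f + (1 - w) * P.hy y' s a g := by
  have h : ∀ s', P.p y' s a s' * (w * f s' + (1 - w) * g s')
      = w * (P.p y' s a s' * f s') + (1 - w) * (P.p y' s a s' * g s') := fun s' => by ring
  simp only [hy, h, Finset.sum_add_distrib, ← Finset.mul_sum]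
  ring

lemma hy_le (P : SEP S Y M A) (y' : Y) (s : S) (a : A) (f g : S → ℝ) (D : ℝ)
    (h : ∀ s', f s' ≤ g s' + D) :
    P.hy y' s a f ≤ P.hy y' s a g + P.β * D := by
  have key : ∑ s', P.p y' s a s' * f s' ≤ (∑ s', P.p y' s a s' * g s') + D := by
    calc ∑ s', P.p y' s a s' * f s'
        ≤ ∑ s', P.p y' s a s' * (g s' + D) :=
          Finset.sum_le_sum fun s' _ =>
            mul_le_mul_of_nonneg_left (h s') (P.p_nonneg y' s a s')
      _ = (∑ s', P.p y' s a s' * g s') + (∑ s', P.p y' s a s') * D := by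
          simp [mul_add, Finset.sum_add_distrib, Finset.sum_mul]
      _ = (∑ s', P.p y' s a s' * g s') + D := by rw [P.p_sum]; ring
  unfold hy
  nlinarith [P.β_nonneg]

end SEP

namespace SEP
variable {S Y M A : Type} [Fintype S] [Fintype Y] [Fintype M] [Fintype A]

lemma lam_conv (P : SEP S Y M A) (b₁ b₂ : Belief M) (t : ℝ) (ht0 : 0 ≤ t) (ht1 : t ≤ 1)
    (y' : Y) (hσ : 0 < P.sig (Belief.conv t ht0 ht1 b₁ b₂) y')
    (w : ℝ) (hw : w = t * P.sig b₁ y' / P.sig (Belief.conv t ht0 ht1 b₁ b₂) y')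
    (hw0 : 0 ≤ w) (hw1 : w ≤ 1) :
    P.lam y' (Belief.conv t ht0 ht1 b₁ b₂)
      = Belief.conv w hw0 hw1 (P.lam y' b₁) (P.lam y' b₂) := by
  set σ := P.sig (Belief.conv t ht0 ht1 b₁ b₂) y' with hσdef
  have hσeq : σ = t * P.sig b₁ y' + (1 - t) * P.sig b₂ y' :=
    P.sig_conv b₁ b₂ t ht0 ht1 y'
  have hw2 : 1 - w = (1 - t) * P.sig b₂ y' / σ := by
    rw [hw]
    field_simp
    linarith [hσeq]
  apply Subtype.ext
  funext μ'
  have hL0 : (P.lam y' (Belief.conv t ht0 ht1 b₁ b₂)).1 μ'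
      = (∑ μ, (Belief.conv t ht0 ht1 b₁ b₂).1 μ * P.Q μ y' μ') / σ := by
    rw [lam, dif_pos hσ]
  have hL : (P.lam y' (Belief.conv t ht0 ht1 b₁ b₂)).1 μ'
      = (t * (∑ μ, b₁.1 μ * P.Q μ y' μ') + (1 - t) * (∑ μ, b₂.1 μ * P.Q μ y' μ')) / σ := by
    rw [hL0, P.num_conv b₁ b₂ t ht0 ht1 y' μ']
  have h1 : w * (P.lam y' b₁).1 μ' = t * (∑ μ, b₁.1 μ * P.Q μ y' μ') / σ := by
    by_cases h : 0 < P.sig b₁ y'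
    · rw [lam, dif_pos h, hw]
      field_simp
    · have hz : P.sig b₁ y' = 0 := le_antisymm (not_lt.mp h) (P.sig_nonneg b₁ y')
      have hn : ∑ μ, b₁.1 μ * P.Q μ y' μ' = 0 := P.num_eq_zero b₁ y' hz μ'
      rw [hw, hz, hn]
      simp
  have h2 : (1 - w) * (P.lam y' b₂).1 μ' = (1 - t) * (∑ μ, b₂.1 μ * P.Q μ y' μ') / σ := by
    by_cases h : 0 < P.sig b₂ y'
    · rw [lam, dif_pos h, hw2]
      field_simp
    · have hz : P.sig b₂ y' = 0 := le_antisymm (not_lt.mp h) (P.sig_nonneg b₂ y')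
      have hn : ∑ μ, b₂.1 μ * P.Q μ y' μ' = 0 := P.num_eq_zero b₂ y' hz μ'
      rw [hw2, hz, hn]
      simp
  show (P.lam y' (Belief.conv t ht0 ht1 b₁ b₂)).1 μ'
      = w * (P.lam y' b₁).1 μ' + (1 - w) * (P.lam y' b₂).1 μ'
  rw [hL, h1, h2, add_div]

lemma step (P : SEP S Y M A) (v : S → Belief M → ℝ) (D : ℝ)
    (hD : ∀ (s : S) (b₁ b₂ : Belief M) (t : ℝ) (ht0 : 0 ≤ t) (ht1 : t ≤ 1),
      t * v s b₁ + (1 - t) * v s b₂ - v s (Belief.conv t ht0 ht1 b₁ b₂) ≤ D)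
    (s : S) (b₁ b₂ : Belief M) (t : ℝ) (ht0 : 0 ≤ t) (ht1 : t ≤ 1) :
    t * P.H v s b₁ + (1 - t) * P.H v s b₂
      ≤ P.H v s (Belief.conv t ht0 ht1 b₁ b₂) + P.β * D := by
  set bc := Belief.conv t ht0 ht1 b₁ b₂ with hbc
  obtain ⟨a, haA, ha⟩ := Finset.exists_mem_eq_inf' (P.act_ne s)
    (fun a => ∑ y', P.sig bc y' * P.hy y' s a fun s' => v s' (P.lam y' bc))
  have hHc : P.H v s bc = ∑ y', P.sig bc y' * P.hy y' s a fun s' => v s' (P.lam y' bc) := ha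
  have hH1 : P.H v s b₁ ≤ ∑ y', P.sig b₁ y' * P.hy y' s a fun s' => v s' (P.lam y' b₁) :=
    Finset.inf'_le _ haA
  have hH2 : P.H v s b₂ ≤ ∑ y', P.sig b₂ y' * P.hy y' s a fun s' => v s' (P.lam y' b₂) :=
    Finset.inf'_le _ haA
  -- per-y' inequality
  have key : ∀ y' : Y,
      t * (P.sig b₁ y' * P.hy y' s a fun s' => v s' (P.lam y' b₁))
        + (1 - t) * (P.sig b₂ y' * P.hy y' s a fun s' => v s' (P.lam y' b₂))
      ≤ P.sig bc y' * (P.hy y' s a fun s' => v s' (P.lam y' bc))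
        + P.sig bc y' * (P.β * D) := by
    intro y'
    set σ := P.sig bc y' with hσdef
    have hσeq : σ = t * P.sig b₁ y' + (1 - t) * P.sig b₂ y' := P.sig_conv b₁ b₂ t ht0 ht1 y'
    rcases (P.sig_nonneg bc y').lt_or_eq with hσ | hσ
    · -- σ > 0
      set w := t * P.sig b₁ y' / σ with hwdef
      have hw0 : 0 ≤ w := div_nonneg (mul_nonneg ht0 (P.sig_nonneg b₁ y')) hσ.le
      have hw1 : w ≤ 1 := by
        rw [hwdef, div_le_one hσ]
        nlinarith [P.sig_nonneg b₂ y']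
      have hlc := P.lam_conv b₁ b₂ t ht0 ht1 y' hσ w hwdef hw0 hw1
      have hdef : ∀ s', w * v s' (P.lam y' b₁) + (1 - w) * v s' (P.lam y' b₂)
          ≤ v s' (P.lam y' bc) + D := by
        intro s'
        have := hD s' (P.lam y' b₁) (P.lam y' b₂) w hw0 hw1
        rw [← hlc] at this
        linarith
      have hhy : P.hy y' s a (fun s' => w * v s' (P.lam y' b₁) + (1 - w) * v s' (P.lam y' b₂))
          ≤ (P.hy y' s a fun s' => v s' (P.lam y' bc)) + P.β * D :=
        P.hy_le y' s a _ _ D hdef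
      rw [P.hy_affine] at hhy
      have e1 : σ * w = t * P.sig b₁ y' := by
        rw [hwdef]; have hσne : σ ≠ 0 := hσ.ne'; field_simp
      have e2 : σ * (1 - w) = (1 - t) * P.sig b₂ y' := by
        rw [hwdef]; field_simp; linarith [hσeq]
      have lhs_eq : t * (P.sig b₁ y' * P.hy y' s a fun s' => v s' (P.lam y' b₁))
          + (1 - t) * (P.sig b₂ y' * P.hy y' s a fun s' => v s' (P.lam y' b₂))
          = σ * ((w * P.hy y' s a fun s' => v s' (P.lam y' b₁))
              + (1 - w) * P.hy y' s a fun s' => v s' (P.lam y' b₂)) := by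
        linear_combination (-(P.hy y' s a fun s' => v s' (P.lam y' b₁))) * e1
          + (-(P.hy y' s a fun s' => v s' (P.lam y' b₂))) * e2
      rw [lhs_eq]
      calc σ * ((w * P.hy y' s a fun s' => v s' (P.lam y' b₁))
              + (1 - w) * P.hy y' s a fun s' => v s' (P.lam y' b₂))
          ≤ σ * ((P.hy y' s a fun s' => v s' (P.lam y' bc)) + P.β * D) :=
            mul_le_mul_of_nonneg_left hhy hσ.le
        _ = σ * (P.hy y' s a fun s' => v s' (P.lam y' bc)) + σ * (P.β * D) := by ring
    · -- σ = 0
      have hσ0 : σ = 0 := hσ.symm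
      have h1 : t * P.sig b₁ y' = 0 := by
        nlinarith [P.sig_nonneg b₁ y', P.sig_nonneg b₂ y', hσeq]
      have h2 : (1 - t) * P.sig b₂ y' = 0 := by
        nlinarith [P.sig_nonneg b₁ y', P.sig_nonneg b₂ y', hσeq]
      have hz : t * (P.sig b₁ y' * P.hy y' s a fun s' => v s' (P.lam y' b₁))
          + (1 - t) * (P.sig b₂ y' * P.hy y' s a fun s' => v s' (P.lam y' b₂)) = 0 := by
        linear_combination (P.hy y' s a fun s' => v s' (P.lam y' b₁)) * h1
          + (P.hy y' s a fun s' => v s' (P.lam y' b₂)) * h2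
      rw [hσ0, hz]
      norm_num
  have hR : ∑ y', ((P.sig bc y' * P.hy y' s a fun s' => v s' (P.lam y' bc))
        + P.sig bc y' * (P.β * D))
      = (∑ y', P.sig bc y' * P.hy y' s a fun s' => v s' (P.lam y' bc)) + P.β * D := by
    rw [Finset.sum_add_distrib, ← Finset.sum_mul, P.sig_sum bc, one_mul]
  have hL' : (t * ∑ y', P.sig b₁ y' * P.hy y' s a fun s' => v s' (P.lam y' b₁))
      + ((1 - t) * ∑ y', P.sig b₂ y' * P.hy y' s a fun s' => v s' (P.lam y' b₂))
      = ∑ y', (t * (P.sig b₁ y' * P.hy y' s a fun s' => v s' (P.lam y' b₁))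
          + (1 - t) * (P.sig b₂ y' * P.hy y' s a fun s' => v s' (P.lam y' b₂))) := by
    rw [Finset.sum_add_distrib, Finset.mul_sum, Finset.mul_sum]
  have hsum : (t * ∑ y', P.sig b₁ y' * P.hy y' s a fun s' => v s' (P.lam y' b₁))
      + ((1 - t) * ∑ y', P.sig b₂ y' * P.hy y' s a fun s' => v s' (P.lam y' b₂))
      ≤ (∑ y', P.sig bc y' * P.hy y' s a fun s' => v s' (P.lam y' bc)) + P.β * D := by
    rw [hL', ← hR]
    exact Finset.sum_le_sum fun y' _ => key y'
  rw [hHc]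
  have l1 : t * P.H v s b₁ ≤ t * ∑ y', P.sig b₁ y' * P.hy y' s a fun s' => v s' (P.lam y' b₁) :=
    mul_le_mul_of_nonneg_left hH1 ht0
  have l2 : (1 - t) * P.H v s b₂
      ≤ ((1 - t) * ∑ y', P.sig b₂ y' * P.hy y' s a fun s' => v s' (P.lam y' b₂)) :=
    mul_le_mul_of_nonneg_left hH2 (by linarith)
  linarith

end SEP

/-- **Concavity of the SEP-POMDP value function in the belief.** The unique
bounded fixed point `vstar` of `H` is concave in the belief argument. -/
theorem value_concave_in_belief {S Y M A : Type} [Fintype S] [Fintype Y] [Fintype M] [Fintype A]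
    [Nonempty S] [Nonempty Y] [Nonempty M] [Nonempty A]
    (P : SEP S Y M A)
    (vstar : S → Belief M → ℝ) (hbdd : SEP.Bdd vstar)
    (hfix : ∀ s b, vstar s b = P.H vstar s b) :
    ∀ (s : S) (b₁ b₂ : Belief M) (t : ℝ) (ht0 : 0 ≤ t) (ht1 : t ≤ 1),
      t * vstar s b₁ + (1 - t) * vstar s b₂ ≤ vstar s (Belief.conv t ht0 ht1 b₁ b₂) := by
  obtain ⟨C, hC⟩ := hbdd
  set Dset : Set ℝ := {d : ℝ | ∃ (s : S) (b₁ b₂ : Belief M) (t : ℝ)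
    (ht0 : 0 ≤ t) (ht1 : t ≤ 1),
    d = t * vstar s b₁ + (1 - t) * vstar s b₂ - vstar s (Belief.conv t ht0 ht1 b₁ b₂)}
    with hDset
  -- a canonical belief
  letI : DecidableEq M := Classical.decEq M
  have μ0 : M := Classical.arbitrary M
  set b0 : Belief M := ⟨fun μ => if μ = μ0 then 1 else 0,
    fun μ => by by_cases h : μ = μ0 <;> simp [h], by simp [Finset.sum_ite_eq']⟩ with hb0
  have hconvself : ∀ (b : Belief M), Belief.conv 1 zero_le_one le_rfl b b = b := by
    intro b
    apply Subtype.ext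
    funext μ
    show 1 * b.1 μ + (1 - 1) * b.1 μ = b.1 μ
    ring
  have hne : Dset.Nonempty := by
    refine ⟨0, Classical.arbitrary S, b0, b0, 1, zero_le_one, le_rfl, ?_⟩
    rw [hconvself b0]
    ring
  have hbddAbove : BddAbove Dset := by
    refine ⟨3 * C, ?_⟩
    rintro d ⟨s, b₁, b₂, t, ht0, ht1, rfl⟩
    have h1 := abs_le.mp (hC s b₁)
    have h2 := abs_le.mp (hC s b₂)
    have h3 := abs_le.mp (hC s (Belief.conv t ht0 ht1 b₁ b₂))
    nlinarith [h1.1, h1.2, h2.1, h2.2, h3.1, h3.2]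
  set D := sSup Dset with hDdef
  have hDle : ∀ (s : S) (b₁ b₂ : Belief M) (t : ℝ) (ht0 : 0 ≤ t) (ht1 : t ≤ 1),
      t * vstar s b₁ + (1 - t) * vstar s b₂ - vstar s (Belief.conv t ht0 ht1 b₁ b₂) ≤ D :=
    fun s b₁ b₂ t ht0 ht1 => le_csSup hbddAbove ⟨s, b₁, b₂, t, ht0, ht1, rfl⟩
  have hstep : ∀ d ∈ Dset, d ≤ P.β * D := by
    rintro d ⟨s, b₁, b₂, t, ht0, ht1, rfl⟩
    have := P.step vstar D hDle s b₁ b₂ t ht0 ht1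
    rw [← hfix s b₁, ← hfix s b₂, ← hfix s (Belief.conv t ht0 ht1 b₁ b₂)] at this
    linarith
  have hsup : D ≤ P.β * D := csSup_le hne hstep
  have hD0 : D ≤ 0 := by nlinarith [P.β_lt_one, P.β_nonneg]
  intro s b₁ b₂ t ht0 ht1
  have := hDle s b₁ b₂ t ht0 ht1
  linarith
end
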